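/- No graph parameter characterizes the set of all graph classes admitting some labeling scheme (G ALL): for every graph parameter λ, either some class bounded by λ has no labeling scheme, or some class with a labeling scheme is unbounded by λ. (Proof via diagonalization: if λ characterized G ALL, the diagonalization class against the countable family {C^λ_{≤i} : i ∈ ℕ} would lie in G ALL yet be unbounded by λ.) -/

import Mathlib

/-- A label decoder is a binary relation on bit strings. -/
def LabelDecoder := List Bool → List Bool → Prop

/-- `G ∈ gr(S)` for the labeling scheme `S = (F, c)`. -/
def InGr (F : LabelDecoder) (c n : ℕ) (G : SimpleGraph (Fin n)) : Prop :=
  ∃ ℓ : Fin n → List Bool,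
    (∀ v, (ℓ v).length = c * Nat.clog 2 n) ∧
    ∀ u v, G.Adj u v ↔ F (ℓ u) (ℓ v)

/-- An (unlabeled) graph. -/
def UGraph := (n : ℕ) × SimpleGraph (Fin n)

/-- `C ∈ G ALL`: `C` admits some labeling scheme with an arbitrary label decoder. -/
def InGALL (C : Set UGraph) : Prop :=
  ∃ (F : LabelDecoder) (c : ℕ), ∀ p ∈ C, InGr F c p.1 p.2

/-- A graph class is bounded by a graph parameter `lam`. -/
def BoundedBy (lam : UGraph → ℕ) (C : Set UGraph) : Prop :=
  ∃ c : ℕ, ∀ G ∈ C, lam G ≤ c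

noncomputable section Aux
open Classical

/-- Encode a natural number as a list of `k` bits. -/
def enc (k m : ℕ) : List Bool := (List.range k).map (fun j => Nat.testBit m j)

lemma enc_length (k m : ℕ) : (enc k m).length = k := by simp [enc]

lemma enc_inj {k m1 m2 : ℕ} (h1 : m1 < 2 ^ k) (h2 : m2 < 2 ^ k)
    (h : enc k m1 = enc k m2) : m1 = m2 := by
  apply Nat.eq_of_testBit_eq
  intro j
  by_cases hj : j < k
  · have := congrArg (fun l => l[j]?) h
    simpa [enc, hj] using this
  · have hk : (2:ℕ) ^ k ≤ 2 ^ j := Nat.pow_le_pow_right (by norm_num) (le_of_not_gt hj)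
    rw [Nat.testBit_lt_two_pow (lt_of_lt_of_le h1 hk),
        Nat.testBit_lt_two_pow (lt_of_lt_of_le h2 hk)]

/-- Three-field label: vertex, size, index of the graph in the sequence. -/
def lab3 (n v i : ℕ) : List Bool :=
  enc (Nat.clog 2 n) v ++ (enc (Nat.clog 2 n) (n - 1) ++ enc (Nat.clog 2 n) i)

lemma lab3_length (n v i : ℕ) : (lab3 n v i).length = 3 * Nat.clog 2 n := by
  simp [lab3, enc_length]; ring

lemma lab3_inj {n v i n' v' i' : ℕ} (hn : 1 ≤ n) (hv : v < n) (hi : i < n)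
    (hv' : v' < n') (hi' : i' < n')
    (h : lab3 n v i = lab3 n' v' i') : n = n' ∧ v = v' ∧ i = i' := by
  have hn' : 1 ≤ n' := le_trans (Nat.one_le_iff_ne_zero.mpr (by omega)) le_rfl
  have hlen : 3 * Nat.clog 2 n = 3 * Nat.clog 2 n' := by
    have := congrArg List.length h
    rwa [lab3_length, lab3_length] at this
  have hk : Nat.clog 2 n = Nat.clog 2 n' := by omega
  set k := Nat.clog 2 n with hkdef
  rw [lab3, lab3, ← hk] at h
  have h1 := List.append_inj h (by rw [enc_length, enc_length])
  have h2 := List.append_inj h1.2 (by rw [enc_length, enc_length])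
  have hbn : n ≤ 2 ^ k := Nat.le_pow_clog (by norm_num) n
  have hbn' : n' ≤ 2 ^ k := by rw [hk]; exact Nat.le_pow_clog (by norm_num) n'
  have ev : v = v' := enc_inj (lt_of_lt_of_le hv hbn) (lt_of_lt_of_le hv' hbn') h1.1
  have en : n - 1 = n' - 1 :=
    enc_inj (lt_of_lt_of_le (Nat.sub_lt hn one_pos) hbn)
      (lt_of_lt_of_le (Nat.sub_lt hn' one_pos) hbn') h2.1
  have ei : i = i' := enc_inj (lt_of_lt_of_le hi hbn) (lt_of_lt_of_le hi' hbn') h2.2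
  exact ⟨by omega, ev, ei⟩

/-- Any class obtained as the range of a sequence of graphs whose sizes dominate the
index admits a labeling scheme. -/
lemma range_inGALL (p : ℕ → UGraph) (hp : ∀ i, i < (p i).1) :
    InGALL (Set.range p) := by
  refine ⟨fun x y => ∃ (i : ℕ) (u v : Fin (p i).1),
      x = lab3 (p i).1 u.val i ∧ y = lab3 (p i).1 v.val i ∧ (p i).2.Adj u v, 3, ?_⟩
  rintro q ⟨i, rfl⟩
  refine ⟨fun v => lab3 (p i).1 v.val i, fun v => lab3_length _ _ _, fun u v => ?_⟩
  constructor
  · intro hadj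
    exact ⟨i, u, v, rfl, rfl, hadj⟩
  · rintro ⟨j, u', v', hx, hy, hadj⟩
    have hni : 1 ≤ (p i).1 := Nat.one_le_iff_ne_zero.mpr (by have := hp i; omega)
    obtain ⟨hn1, hu1, hij⟩ := lab3_inj hni u.isLt (hp i) u'.isLt (hp j) hx
    obtain ⟨_, hv1, -⟩ := lab3_inj hni v.isLt (hp i) v'.isLt (hp j) hy
    subst hij
    have hu : u = u' := Fin.ext hu1
    have hv : v = v' := Fin.ext hv1
    rw [hu, hv]; exact hadj

lemma exists_exponent (c : ℕ) : ∃ m : ℕ, 2 * c * (m + 1) < 2 ^ m := by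
  refine ⟨4 * c + 8, ?_⟩
  have key : ∀ c : ℕ, 2 * c * (4 * c + 9) + 100 ≤ 2 ^ (4 * c + 8) := by
    intro c
    induction c with
    | zero => norm_num
    | succ d ih =>
      have h16 : (2:ℕ) ^ (4 * (d + 1) + 8) = 16 * 2 ^ (4 * d + 8) := by
        rw [show 4 * (d + 1) + 8 = 4 + (4 * d + 8) by ring, pow_add]; norm_num
      rw [h16]; nlinarith [ih]
  have h1 := key c
  have h2 : 2 * c * (4 * c + 8 + 1) = 2 * c * (4 * c + 9) := by ring
  omega

/-- The bipartite graph on `Fin (2*t)` built from `f : Fin t → Fin t → Bool`. -/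
def bip (t : ℕ) (f : Fin t → Fin t → Bool) : SimpleGraph (Fin (2 * t)) where
  Adj a b :=
    (∃ (ha : a.val < t) (hb : b.val - t < t), t ≤ b.val ∧ f ⟨a.val, ha⟩ ⟨b.val - t, hb⟩ = true) ∨
    (∃ (hb : b.val < t) (ha : a.val - t < t), t ≤ a.val ∧ f ⟨b.val, hb⟩ ⟨a.val - t, ha⟩ = true)
  symm := by
    refine ⟨?_⟩; rintro a b (h | h)
    · exact Or.inr h
    · exact Or.inl h
  loopless := by
    refine ⟨?_⟩; rintro a (⟨h1, h2, h3, -⟩ | ⟨h1, h2, h3, -⟩) <;> omega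

lemma bip_adj_iff (t : ℕ) (f : Fin t → Fin t → Bool) (i j : Fin t) :
    (bip t f).Adj ⟨i.val, by omega⟩ ⟨t + j.val, by omega⟩ ↔ f i j = true := by
  constructor
  · rintro (⟨h1, h2, h3, h4⟩ | ⟨h1, h2, h3, h4⟩)
    · have e1 : (⟨i.val, h1⟩ : Fin t) = i := rfl
      have e2 : (⟨t + j.val - t, h2⟩ : Fin t) = j := Fin.ext (by show t + j.val - t = j.val; omega)
      rwa [e1, e2] at h4
    · exfalso; simp only [Fin.val_mk] at h1 h3; omega
  · intro hf
    refine Or.inl ⟨i.isLt, by simp only [Fin.val_mk]; omega, by simp only [Fin.val_mk]; omega, ?_⟩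
    have e2 : (⟨t + j.val - t, by omega⟩ : Fin t) = j :=
      Fin.ext (by show t + j.val - t = j.val; omega)
    rw [e2]; exact hf

lemma bip_inj (t : ℕ) : Function.Injective (bip t) := by
  intro f1 f2 h
  funext i j
  have h1 := bip_adj_iff t f1 i j
  have h2 := bip_adj_iff t f2 i j
  rw [h] at h1
  have : f1 i j = true ↔ f2 i j = true := h1.symm.trans h2
  exact Bool.coe_iff_coe.mp this

/-- The class of all graphs has no labeling scheme. -/
lemma univ_not_inGALL : ¬ InGALL (Set.univ : Set UGraph) := by
  rintro ⟨F, c, hF⟩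
  obtain ⟨m, hm⟩ := exists_exponent c
  set t : ℕ := 2 ^ m with ht
  set n : ℕ := 2 * t with hn
  have hclog : Nat.clog 2 n = m + 1 := by
    rw [hn, ht, show 2 * 2 ^ m = 2 ^ (m + 1) by rw [pow_succ]; ring]
    exact Nat.clog_pow 2 (m + 1) (by norm_num)
  set L : ℕ := c * (m + 1) with hL
  -- labeling of each graph on `Fin n`
  have hAll : ∀ G : SimpleGraph (Fin n), InGr F c n G := fun G =>
    hF ⟨n, G⟩ (Set.mem_univ _)
  let ell : SimpleGraph (Fin n) → Fin n → List Bool := fun G => (hAll G).choose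
  have hell : ∀ G, (∀ v, ((ell G) v).length = c * Nat.clog 2 n) ∧
      ∀ u v, G.Adj u v ↔ F (ell G u) (ell G v) := fun G => (hAll G).choose_spec
  let Φ : SimpleGraph (Fin n) → (Fin n → List.Vector Bool L) := fun G v =>
    ⟨ell G v, by rw [(hell G).1 v, hclog, hL]⟩
  have hΦ : Function.Injective Φ := by
    intro G1 G2 hG
    ext u v
    have he : ∀ w, ell G1 w = ell G2 w := fun w =>
      congrArg Subtype.val (congrFun hG w)
    rw [(hell G1).2 u v, (hell G2).2 u v, he u, he v]
  have hinj : Function.Injective (fun f : Fin t → Fin t → Bool => Φ (bip t f)) :=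
    hΦ.comp (bip_inj t)
  have hcard := Fintype.card_le_of_injective _ hinj
  rw [Fintype.card_fun, Fintype.card_fun, Fintype.card_fun] at hcard
  simp only [card_vector, Fintype.card_bool, Fintype.card_fin] at hcard
  rw [← pow_mul, ← pow_mul] at hcard
  have hle : t * t ≤ L * n := (Nat.pow_le_pow_iff_right (by norm_num)).mp hcard
  have htpos : 0 < t := Nat.pow_pos (n := m) (by norm_num)
  have : t ≤ L * 2 := by
    rw [hn] at hle
    have : t * t ≤ (L * 2) * t := by calc t * t ≤ L * (2 * t) := hle
                                         _ = (L * 2) * t := by ring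
    exact Nat.le_of_mul_le_mul_right this htpos
  have h2 : 2 * c * (m + 1) = L * 2 := by rw [hL]; ring
  omega

end Aux

/-- No graph parameter characterizes `G ALL`: for every parameter `lam` it fails that a
class has a labeling scheme iff it is bounded by `lam`. -/
theorem stmt_10 (lam : UGraph → ℕ) :
    ¬ (∀ C : Set UGraph, InGALL C ↔ BoundedBy lam C) := by
  intro h
  by_cases hB : ∃ B, ∀ p : UGraph, lam p ≤ B
  · obtain ⟨B, hB⟩ := hB
    exact univ_not_inGALL ((h Set.univ).mpr ⟨B, fun G _ => hB G⟩)
  · push_neg at hB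
    -- `M N` bounds `lam` on all graphs of size at most `N`
    set M : ℕ → ℕ := fun N =>
      (Finset.range (N + 1)).sup fun n =>
        Finset.univ.sup fun G : SimpleGraph (Fin n) => lam ⟨n, G⟩ with hMdef
    have hM : ∀ (N : ℕ) (p : UGraph), p.1 ≤ N → lam p ≤ M N := by
      intro N p hle
      have h1 : lam ⟨p.1, p.2⟩ ≤
          Finset.univ.sup (fun G : SimpleGraph (Fin p.1) => lam ⟨p.1, G⟩) :=
        Finset.le_sup (f := fun G : SimpleGraph (Fin p.1) => lam ⟨p.1, G⟩) (Finset.mem_univ p.2)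
      have h2 : Finset.univ.sup (fun G : SimpleGraph (Fin p.1) => lam ⟨p.1, G⟩) ≤ M N := by
        rw [hMdef]
        exact Finset.le_sup
          (f := fun n => Finset.univ.sup fun G : SimpleGraph (Fin n) => lam ⟨n, G⟩)
          (Finset.mem_range.mpr (Nat.lt_succ_of_le hle))
      exact le_trans h1 h2
    choose q hq using fun i => hB (max i (M i))
    have hsz : ∀ i, i < (q i).1 := by
      intro i
      by_contra hle
      have h1 := hM i (q i) (by omega)
      have h2 := hq i
      have h3 := le_max_right i (M i)
      omega
    obtain ⟨B, hb⟩ := (h _).mp (range_inGALL q hsz)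
    have h1 := hb (q (B + 1)) ⟨B + 1, rfl⟩
    have h2 := hq (B + 1)
    have h3 := le_max_left (B + 1) (M (B + 1))
    omega
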